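/- Let A be a unital associative F-algebra with a group homomorphism σ : G → A^× from a finite group G, let U and V be subgroups of G, and let φ : V → U be a group isomorphism. Let J be a finite index set, let (e_t)_{t∈J} be pairwise orthogonal idempotents of A^V with Σ_{t∈J} e_t = 1, let (f_t)_{t∈J} be pairwise orthogonal idempotents of A^U with Σ_{t∈J} f_t = 1, and suppose that for each t ∈ J there is a φ-witness (s_t, s'_t) : e_t ↦ f_t. Then s := Σ_{t∈J} s_t is a unit of A with inverse Σ_{t∈J} s'_t, and σ(φ(v)) s = s σ(v) for all v ∈ V. -/
import Mathlib


/-- For an interior `G`-algebra `A` with structural homomorphism `σ : G → Aˣ`, subgroups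
`U, V ≤ G`, a group isomorphism `φ : V → U` and idempotents `i ∈ A^U`, `j ∈ A^V`, a pair
`(s, s')` is a `φ`-witness `j ↦ i` when `s ∈ i A^φ j`, `s' ∈ j A^{φ⁻¹} i`, `s s' = i` and
`s' s = j`.  Here `A^φ = {a : σ(φ(v)) a = a σ(v) for all v ∈ V}`, and membership in
`i A^φ j` is recorded as lying in `A^φ` and being fixed by left multiplication by `i` and
right multiplication by `j`. -/
def IsWitness {G : Type*} [Group G] {A : Type*} [Ring A] (σ : G →* Aˣ)
    {U V : Subgroup G} (φ : V ≃* U) (i j s s' : A) : Prop :=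
  (∀ v : V, (σ ((φ v : U) : G) : A) * s = s * (σ (v : G) : A)) ∧
    i * s = s ∧ s * j = s ∧
  (∀ u : U, (σ ((φ.symm u : V) : G) : A) * s' = s' * (σ (u : G) : A)) ∧
    j * s' = s' ∧ s' * i = s' ∧
  s * s' = i ∧ s' * s = j

/-- Summing witnesses (from the proof of Theorem 5.2, (b) ⇒ (c)): given primitive
idempotent decompositions `1 = Σ_t e_t` in `A^V` and `1 = Σ_t f_t` in `A^U`, with a
`φ`-witness `(s_t, s'_t) : e_t ↦ f_t` for each `t`, the element `s = Σ_t s_t` is a unit of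
`A` with inverse `Σ_t s'_t`, and `σ(φ(v)) s = s σ(v)` for all `v ∈ V`. -/
theorem stmt10 (F : Type*) [Field F] (A : Type*) [Ring A] [Algebra F A]
    (G : Type*) [Group G] [Finite G] (σ : G →* Aˣ)
    (U V : Subgroup G) (φ : V ≃* U) (J : Type*) [Fintype J] (e f : J → A)
    (he : ∀ t, e t * e t = e t) (heV : ∀ t, ∀ v : V, (σ (v : G) : A) * e t = e t * (σ (v : G) : A))
    (heo : ∀ t t', t ≠ t' → e t * e t' = 0) (hesum : ∑ t, e t = 1)
    (hf : ∀ t, f t * f t = f t) (hfU : ∀ t, ∀ u : U, (σ (u : G) : A) * f t = f t * (σ (u : G) : A))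
    (hfo : ∀ t t', t ≠ t' → f t * f t' = 0) (hfsum : ∑ t, f t = 1)
    (s s' : J → A) (hw : ∀ t, IsWitness σ φ (f t) (e t) (s t) (s' t)) :
    IsUnit (∑ t, s t) ∧ (∑ t, s t) * (∑ t, s' t) = 1 ∧ (∑ t, s' t) * (∑ t, s t) = 1 ∧
      ∀ v : V, (σ ((φ v : U) : G) : A) * (∑ t, s t) = (∑ t, s t) * (σ (v : G) : A) := by
  have key1 : (∑ t, s t) * (∑ t, s' t) = 1 := by
    rw [Finset.sum_mul_sum]
    rw [← hfsum]
    apply Finset.sum_congr rfl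
    intro t _
    rw [Finset.sum_eq_single t]
    · exact (hw t).2.2.2.2.2.2.1
    · intro t' _ hne
      obtain ⟨_, _, hsj, _, hjs', _, _, _⟩ := hw t
      obtain ⟨_, _, _, _, hjs'', _, _, _⟩ := hw t'
      conv_lhs => rw [← hsj, ← hjs'']
      rw [mul_assoc, ← mul_assoc (e t), heo t t' (Ne.symm hne), zero_mul, mul_zero]
    · intro h; exact absurd (Finset.mem_univ t) h
  have key2 : (∑ t, s' t) * (∑ t, s t) = 1 := by
    rw [Finset.sum_mul_sum]
    rw [← hesum]
    apply Finset.sum_congr rfl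
    intro t _
    rw [Finset.sum_eq_single t]
    · exact (hw t).2.2.2.2.2.2.2
    · intro t' _ hne
      obtain ⟨_, _, _, _, _, hs'i, _, _⟩ := hw t
      obtain ⟨_, hfs, _, _, _, _, _, _⟩ := hw t'
      conv_lhs => rw [← hs'i, ← hfs]
      rw [mul_assoc, ← mul_assoc (f t), hfo t t' (Ne.symm hne), zero_mul, mul_zero]
    · intro h; exact absurd (Finset.mem_univ t) h
  refine ⟨⟨⟨∑ t, s t, ∑ t, s' t, key1, key2⟩, rfl⟩, key1, key2, ?_⟩
  intro v
  rw [Finset.mul_sum, Finset.sum_mul]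
  exact Finset.sum_congr rfl fun t _ => (hw t).1 v
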